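/- For all positive integers r, r' with r' ≤ r, the graph theta_{r,r'} is a minor of the r-star, of the r-path, of the (r+r'+1)-fan, and (when r ≥ 6) of the r-wall. -/

import Mathlib

open SimpleGraph

/-- `G` contains `θ_{r,r'}` as a minor: there are three disjoint nonempty connected branch
sets `A`, `B`, `C` with at least `r` edges between `A` and `B` and at least `r'` edges
between `B` and `C`. -/
def HasThetaTwoMinor {V : Type*} (G : SimpleGraph V) (r r' : ℕ) : Prop :=
  ∃ A B C : Set V,
    A.Nonempty ∧ B.Nonempty ∧ C.Nonempty ∧
    Disjoint A B ∧ Disjoint A C ∧ Disjoint B C ∧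
    (G.induce A).Connected ∧ (G.induce B).Connected ∧ (G.induce C).Connected ∧
    r ≤ Set.ncard {e ∈ G.edgeSet | ∃ u ∈ A, ∃ v ∈ B, e = s(u, v)} ∧
    r' ≤ Set.ncard {e ∈ G.edgeSet | ∃ u ∈ B, ∃ v ∈ C, e = s(u, v)}

/-- The `n`-fan: a path on `n` vertices together with a dominating vertex `none`. -/
def fanGraph (n : ℕ) : SimpleGraph (Option (Fin n)) :=
  SimpleGraph.fromRel fun a b =>
    (∃ i : Fin n, a = some i ∧ b = none) ∨
    (∃ i j : Fin n, a = some i ∧ b = some j ∧ i.val + 1 = j.val)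

/-- The `n`-star: `K_{1,n}` (center `none`, leaves `some (inl i)`) with each edge replaced
by `n` independent paths of two edges (midpoints `some (inr (i, j))`). -/
def starGraph (n : ℕ) : SimpleGraph (Option (Fin n ⊕ Fin n × Fin n)) :=
  SimpleGraph.fromRel fun a b =>
    (∃ q : Fin n × Fin n, a = none ∧ b = some (Sum.inr q)) ∨
    (∃ i j : Fin n, a = some (Sum.inr (i, j)) ∧ b = some (Sum.inl i))

/-- The `n`-path: a path with `n` edges (vertices `inl k`) in which each edge is replaced by
`n` independent paths of two edges (midpoints `inr (i, j)` on the `i`-th edge). -/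
def nPathGraph (n : ℕ) : SimpleGraph (Fin (n + 1) ⊕ Fin n × Fin n) :=
  SimpleGraph.fromRel fun a b =>
    ∃ i j : Fin n,
      (a = Sum.inl i.castSucc ∧ b = Sum.inr (i, j)) ∨
      (a = Sum.inr (i, j) ∧ b = Sum.inl i.succ)

/-- The `n`-wall on vertex set `Fin n × Fin n` (rows × columns): all horizontal edges, and
the vertical edges between consecutive rows at columns of the appropriate parity. -/
def wallGraph (n : ℕ) : SimpleGraph (Fin n × Fin n) :=
  SimpleGraph.fromRel fun a b =>
    (a.1 = b.1 ∧ a.2.val + 1 = b.2.val) ∨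
    (a.2 = b.2 ∧ a.1.val + 1 = b.1.val ∧ Even (a.1.val + a.2.val))

lemma le_ncard_of_inj {α : Type*} [Fintype α] {S : Set α} {r : ℕ}
    (f : Fin r → α) (hinj : Function.Injective f) (hmem : ∀ i, f i ∈ S) :
    r ≤ S.ncard := by
  have hsub : Set.range f ⊆ S := by rintro _ ⟨i, rfl⟩; exact hmem i
  have h1 : (Set.range f).ncard = r := by
    rw [← Set.image_univ, Set.ncard_image_of_injective _ hinj, Set.ncard_univ,
      Nat.card_eq_fintype_card, Fintype.card_fin]
  rw [← h1]
  exact Set.ncard_le_ncard hsub (Set.toFinite S)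

lemma induce_connected_of_rank {V : Type*} (G : SimpleGraph V) (A : Set V)
    (c : V) (hc : c ∈ A) (rank : V → ℕ)
    (h : ∀ v ∈ A, v ≠ c → ∃ w ∈ A, G.Adj v w ∧ rank w < rank v) :
    (G.induce A).Connected := by
  rw [SimpleGraph.connected_iff]
  refine ⟨?_, ⟨⟨c, hc⟩⟩⟩
  have key : ∀ n : ℕ, ∀ v : A, rank v.val ≤ n → (G.induce A).Reachable v ⟨c, hc⟩ := by
    intro n
    induction n with
    | zero =>
      intro v hv
      by_cases hvc : v.val = c
      · rw [show v = ⟨c, hc⟩ from Subtype.ext hvc]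
      · obtain ⟨w, hw, hadj, hlt⟩ := h v.val v.prop hvc
        omega
    | succ n ih =>
      intro v hv
      by_cases hvc : v.val = c
      · rw [show v = ⟨c, hc⟩ from Subtype.ext hvc]
      · obtain ⟨w, hw, hadj, hlt⟩ := h v.val v.prop hvc
        have hadj' : (G.induce A).Adj v ⟨w, hw⟩ := hadj
        exact hadj'.reachable.trans (ih ⟨w, hw⟩ (show rank w ≤ n by omega))
  intro u v
  exact (key _ u le_rfl).trans (key _ v le_rfl).symm

lemma induce_connected_singleton {V : Type*} (G : SimpleGraph V) (a : V) :
    (G.induce {a}).Connected :=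
  induce_connected_of_rank G {a} a rfl (fun _ => 0)
    (by rintro v rfl hv; exact absurd rfl hv)

lemma star_case (r r' : ℕ) (hr' : 1 ≤ r') (hrr : r' ≤ r) :
    HasThetaTwoMinor (_root_.starGraph r) r r' := by
  rcases eq_or_lt_of_le (hr'.trans hrr) with h | h
  · -- r = 1
    subst h
    have : r' = 1 := le_antisymm hrr hr'
    subst this
    refine ⟨{some (Sum.inl 0)}, {some (Sum.inr (0, 0))}, {none},
      ⟨_, rfl⟩, ⟨_, rfl⟩, ⟨_, rfl⟩, by simp, by simp, by simp,
      induce_connected_singleton _ _, induce_connected_singleton _ _,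
      induce_connected_singleton _ _, ?_, ?_⟩
    · refine le_ncard_of_inj (fun _ => s(some (Sum.inl 0), some (Sum.inr (0, 0))))
        (fun a b _ => Subsingleton.elim a b) (fun i => ⟨?_, _, rfl, _, rfl, rfl⟩)
      simp only [SimpleGraph.mem_edgeSet, _root_.starGraph, SimpleGraph.fromRel_adj]
      exact ⟨by simp, by tauto⟩
    · refine le_ncard_of_inj (fun _ => s(some (Sum.inr (0, 0)), none))
        (fun a b _ => Subsingleton.elim a b) (fun i => ⟨?_, _, rfl, _, rfl, rfl⟩)
      simp only [SimpleGraph.mem_edgeSet, _root_.starGraph, SimpleGraph.fromRel_adj]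
      exact ⟨by simp, by tauto⟩
  · -- r ≥ 2
    refine ⟨{v | v = some (Sum.inl ⟨0, by omega⟩) ∨ ∃ j, v = some (Sum.inr (⟨0, by omega⟩, j))},
            {v | v = none ∨ ∃ j, v = some (Sum.inr (⟨1, h⟩, j))},
            {some (Sum.inl ⟨1, h⟩)},
            ⟨_, Or.inl rfl⟩, ⟨_, Or.inl rfl⟩, ⟨_, rfl⟩, ?_, ?_, ?_, ?_, ?_,
            induce_connected_singleton _ _, ?_, ?_⟩
    · rw [Set.disjoint_left]
      rintro v (rfl | ⟨j, rfl⟩) (hB | ⟨j', hB⟩) <;> simp_all [Fin.ext_iff]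
    · rw [Set.disjoint_left]
      rintro v (rfl | ⟨j, rfl⟩) hB <;> simp_all [Fin.ext_iff]
    · rw [Set.disjoint_left]
      rintro v (rfl | ⟨j, rfl⟩) hB <;> simp_all [Fin.ext_iff]
    · refine induce_connected_of_rank _ _ (some (Sum.inl ⟨0, by omega⟩)) (Or.inl rfl)
        (fun v => if v = some (Sum.inl ⟨0, by omega⟩) then 0 else 1) ?_
      rintro v (rfl | ⟨j, rfl⟩) hvc
      · exact absurd rfl hvc
      · refine ⟨some (Sum.inl ⟨0, by omega⟩), Or.inl rfl, ?_, by simp⟩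
        simp [_root_.starGraph, SimpleGraph.fromRel_adj]
    · refine induce_connected_of_rank _ _ none (Or.inl rfl)
        (fun v => if v = none then 0 else 1) ?_
      rintro v (rfl | ⟨j, rfl⟩) hvc
      · exact absurd rfl hvc
      · refine ⟨none, Or.inl rfl, ?_, by simp⟩
        simp [_root_.starGraph, SimpleGraph.fromRel_adj]
    · refine le_ncard_of_inj (fun j => s(some (Sum.inr (⟨0, by omega⟩, j)), none))
        (fun a b hab => by simpa [Sym2.eq_iff] using hab)
        (fun j => ⟨?_, _, Or.inr ⟨j, rfl⟩, none, Or.inl rfl, rfl⟩)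
      simp [_root_.starGraph, SimpleGraph.fromRel_adj]
    · refine le_ncard_of_inj
        (fun j => s(some (Sum.inr (⟨1, h⟩, Fin.castLE hrr j)), some (Sum.inl ⟨1, h⟩)))
        (fun a b hab => by
          simp [Sym2.eq_iff, Fin.ext_iff] at hab
          exact Fin.ext hab)
        (fun j => ⟨?_, _, Or.inr ⟨_, rfl⟩, _, rfl, rfl⟩)
      simp [_root_.starGraph, SimpleGraph.fromRel_adj]

lemma npath_case (r r' : ℕ) (hr' : 1 ≤ r') (hrr : r' ≤ r) :
    HasThetaTwoMinor (nPathGraph r) r r' := by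
  rcases eq_or_lt_of_le (hr'.trans hrr) with h | h
  · -- r = 1
    subst h
    have : r' = 1 := le_antisymm hrr hr'
    subst this
    refine ⟨{Sum.inl 0}, {Sum.inr (0, 0)}, {Sum.inl 1},
      ⟨_, rfl⟩, ⟨_, rfl⟩, ⟨_, rfl⟩, by simp, by simp, by simp [Fin.ext_iff],
      induce_connected_singleton _ _, induce_connected_singleton _ _,
      induce_connected_singleton _ _, ?_, ?_⟩
    · refine le_ncard_of_inj (fun _ => s(Sum.inl 0, Sum.inr (0, 0)))
        (fun a b _ => Subsingleton.elim a b) (fun i => ⟨?_, _, rfl, _, rfl, rfl⟩)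
      rw [SimpleGraph.mem_edgeSet, nPathGraph, SimpleGraph.fromRel_adj]
      exact ⟨by simp, Or.inl ⟨0, 0, Or.inl ⟨rfl, rfl⟩⟩⟩
    · refine le_ncard_of_inj (fun _ => s(Sum.inr (0, 0), Sum.inl 1))
        (fun a b _ => Subsingleton.elim a b) (fun i => ⟨?_, _, rfl, _, rfl, rfl⟩)
      rw [SimpleGraph.mem_edgeSet, nPathGraph, SimpleGraph.fromRel_adj]
      exact ⟨by simp, Or.inl ⟨0, 0, Or.inr ⟨rfl, rfl⟩⟩⟩
  · -- r ≥ 2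
    refine ⟨{Sum.inl ⟨0, by omega⟩},
            {v | v = Sum.inl ⟨1, by omega⟩ ∨ ∃ j, v = Sum.inr (⟨0, by omega⟩, j)},
            {v | v = Sum.inl ⟨2, by omega⟩ ∨ ∃ j, v = Sum.inr (⟨1, h⟩, j)},
            ⟨_, rfl⟩, ⟨_, Or.inl rfl⟩, ⟨_, Or.inl rfl⟩, ?_, ?_, ?_,
            induce_connected_singleton _ _, ?_, ?_, ?_, ?_⟩
    · rw [Set.disjoint_left]
      rintro v rfl (hB | ⟨j, hB⟩) <;> simp_all [Fin.ext_iff]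
    · rw [Set.disjoint_left]
      rintro v rfl (hB | ⟨j, hB⟩) <;> simp_all [Fin.ext_iff]
    · rw [Set.disjoint_left]
      rintro v (rfl | ⟨j, rfl⟩) (hB | ⟨j', hB⟩) <;> simp_all [Fin.ext_iff]
    · refine induce_connected_of_rank _ _ (Sum.inl ⟨1, by omega⟩) (Or.inl rfl)
        (fun v => if v = Sum.inl ⟨1, by omega⟩ then 0 else 1) ?_
      rintro v (rfl | ⟨j, rfl⟩) hvc
      · exact absurd rfl hvc
      · refine ⟨Sum.inl ⟨1, by omega⟩, Or.inl rfl, ?_, by simp⟩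
        rw [nPathGraph, SimpleGraph.fromRel_adj]
        exact ⟨by simp, Or.inl ⟨⟨0, by omega⟩, j, Or.inr ⟨rfl, rfl⟩⟩⟩
    · refine induce_connected_of_rank _ _ (Sum.inl ⟨2, by omega⟩) (Or.inl rfl)
        (fun v => if v = Sum.inl ⟨2, by omega⟩ then 0 else 1) ?_
      rintro v (rfl | ⟨j, rfl⟩) hvc
      · exact absurd rfl hvc
      · refine ⟨Sum.inl ⟨2, by omega⟩, Or.inl rfl, ?_, by simp⟩
        rw [nPathGraph, SimpleGraph.fromRel_adj]
        exact ⟨by simp, Or.inl ⟨⟨1, h⟩, j, Or.inr ⟨rfl, rfl⟩⟩⟩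
    · refine le_ncard_of_inj (fun j => s(Sum.inl ⟨0, by omega⟩, Sum.inr (⟨0, by omega⟩, j)))
        (fun a b hab => by simpa [Sym2.eq_iff] using hab)
        (fun j => ⟨?_, _, rfl, _, Or.inr ⟨j, rfl⟩, rfl⟩)
      rw [SimpleGraph.mem_edgeSet, nPathGraph, SimpleGraph.fromRel_adj]
      exact ⟨by simp, Or.inl ⟨⟨0, by omega⟩, _, Or.inl ⟨rfl, rfl⟩⟩⟩
    · refine le_ncard_of_inj
        (fun j => s(Sum.inl ⟨1, by omega⟩, Sum.inr (⟨1, h⟩, Fin.castLE hrr j)))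
        (fun a b hab => by
          simp [Sym2.eq_iff, Fin.ext_iff] at hab
          exact Fin.ext hab)
        (fun j => ⟨?_, _, Or.inl rfl, _, Or.inr ⟨_, rfl⟩, rfl⟩)
      rw [SimpleGraph.mem_edgeSet, nPathGraph, SimpleGraph.fromRel_adj]
      exact ⟨by simp, Or.inl ⟨⟨1, h⟩, _, Or.inl ⟨rfl, rfl⟩⟩⟩

lemma fan_case (r r' : ℕ) (hr' : 1 ≤ r') (hrr : r' ≤ r) :
    HasThetaTwoMinor (fanGraph (r + r' + 1)) r r' := by
  have hr : 1 ≤ r := hr'.trans hrr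
  refine ⟨{v | ∃ i : Fin (r + r' + 1), v = some i ∧ i.val < r}, {none},
          {v | ∃ i : Fin (r + r' + 1), v = some i ∧ r + 1 ≤ i.val},
          ⟨some ⟨0, by omega⟩, ⟨_, rfl, by simp only [Fin.val_mk]; omega⟩⟩, ⟨_, rfl⟩,
          ⟨some ⟨r + 1, by omega⟩, ⟨_, rfl, by simp only [Fin.val_mk]; omega⟩⟩, ?_, ?_, ?_,
          ?_, induce_connected_singleton _ _, ?_, ?_, ?_⟩
  · rw [Set.disjoint_left]
    rintro v ⟨i, rfl, hi⟩ hB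
    simp_all
  · rw [Set.disjoint_left]
    rintro v ⟨i, rfl, hi⟩ ⟨i', hv, hi'⟩
    rw [Option.some_inj] at hv
    subst hv
    omega
  · rw [Set.disjoint_left]
    rintro v rfl ⟨i, hv, hi⟩
    simp_all
  · refine induce_connected_of_rank _ _ (some ⟨0, by omega⟩) ⟨_, rfl, by simp only [Fin.val_mk]; omega⟩
      (fun v => Option.elim v 0 Fin.val) ?_
    rintro v ⟨i, rfl, hi⟩ hvc
    have hi0 : i.val ≠ 0 := by
      intro h0
      exact hvc (by rw [Option.some_inj]; exact Fin.ext h0)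
    refine ⟨some ⟨i.val - 1, by omega⟩, ⟨_, rfl, by simp only [Fin.val_mk]; omega⟩, ?_, by
      show i.val - 1 < i.val; omega⟩
    rw [fanGraph, SimpleGraph.fromRel_adj]
    refine ⟨by simp [Fin.ext_iff]; omega, Or.inr (Or.inr ⟨_, i, rfl, rfl, by simp; omega⟩)⟩
  · refine induce_connected_of_rank _ _ (some ⟨r + 1, by omega⟩) ⟨_, rfl, by simp only [Fin.val_mk]; omega⟩
      (fun v => Option.elim v 0 Fin.val) ?_
    rintro v ⟨i, rfl, hi⟩ hvc
    have hi0 : i.val ≠ r + 1 := by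
      intro h0
      exact hvc (by rw [Option.some_inj]; exact Fin.ext h0)
    refine ⟨some ⟨i.val - 1, by omega⟩, ⟨_, rfl, by simp only [Fin.val_mk]; omega⟩, ?_, by
      show i.val - 1 < i.val; omega⟩
    rw [fanGraph, SimpleGraph.fromRel_adj]
    refine ⟨by simp [Fin.ext_iff]; omega, Or.inr (Or.inr ⟨_, i, rfl, rfl, by simp; omega⟩)⟩
  · refine le_ncard_of_inj (fun t => s(some ⟨t.val, by omega⟩, none))
      (fun a b hab => by
        simp [Sym2.eq_iff, Fin.ext_iff] at hab
        exact Fin.ext hab)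
      (fun t => ⟨?_, _, ⟨_, rfl, t.isLt⟩, none, rfl, rfl⟩)
    rw [SimpleGraph.mem_edgeSet, fanGraph, SimpleGraph.fromRel_adj]
    exact ⟨by simp, Or.inl (Or.inl ⟨_, rfl, rfl⟩)⟩
  · refine le_ncard_of_inj (fun t => s(none, some ⟨r + 1 + t.val, by omega⟩))
      (fun a b hab => by
        simp [Sym2.eq_iff, Fin.ext_iff] at hab
        exact Fin.ext (by omega))
      (fun t => ⟨?_, none, rfl, _, ⟨_, rfl, by simp only [Fin.val_mk]; omega⟩, rfl⟩)
    rw [SimpleGraph.mem_edgeSet, fanGraph, SimpleGraph.fromRel_adj]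
    exact ⟨by simp, Or.inr (Or.inl ⟨_, rfl, rfl⟩)⟩

lemma wall_pair_connected (n m : ℕ) (hm : m % 2 = 0) (hmn : m + 1 < n) :
    ((wallGraph n).induce {p : Fin n × Fin n | p.2.val = m ∨ p.2.val = m + 1}).Connected := by
  refine induce_connected_of_rank _ _ ((⟨0, by omega⟩ : Fin n), (⟨m + 1, hmn⟩ : Fin n))
    (Or.inr rfl)
    (fun p => 2 * p.1.val + (if p.1.val % 2 = 0 then (m + 1) - p.2.val else p.2.val - m)) ?_
  rintro ⟨i, j⟩ hv hvc
  replace hv : j.val = m ∨ j.val = m + 1 := hv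
  replace hvc : ¬(i.val = 0 ∧ j.val = m + 1) := fun hc =>
    hvc (Prod.ext (Fin.ext hc.1) (Fin.ext hc.2))
  rcases hv with hj | hj
  · rcases Nat.even_or_odd i.val with hie | hio
    · rw [Nat.even_iff] at hie
      refine ⟨(i, ⟨m + 1, hmn⟩), Or.inr rfl, ?_, ?_⟩
      · rw [wallGraph, SimpleGraph.fromRel_adj]
        exact ⟨by simp [Prod.ext_iff, Fin.ext_iff]; omega,
          Or.inl (Or.inl ⟨rfl, by dsimp only; omega⟩)⟩
      · dsimp only
        split_ifs
        omega
    · rw [Nat.odd_iff] at hio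
      refine ⟨(⟨i.val - 1, by omega⟩, j), Or.inl hj, ?_, ?_⟩
      · rw [wallGraph, SimpleGraph.fromRel_adj]
        refine ⟨by simp [Prod.ext_iff, Fin.ext_iff]; omega,
          Or.inr (Or.inr ⟨rfl, by dsimp only; omega, ?_⟩)⟩
        rw [Nat.even_iff]; dsimp only; omega
      · dsimp only
        split_ifs <;> omega
  · rcases Nat.even_or_odd i.val with hie | hio
    · rw [Nat.even_iff] at hie
      have h1 : 1 ≤ i.val := by omega
      refine ⟨(⟨i.val - 1, by omega⟩, j), Or.inr hj, ?_, ?_⟩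
      · rw [wallGraph, SimpleGraph.fromRel_adj]
        refine ⟨by simp [Prod.ext_iff, Fin.ext_iff]; omega,
          Or.inr (Or.inr ⟨rfl, by dsimp only; omega, ?_⟩)⟩
        rw [Nat.even_iff]; dsimp only; omega
      · dsimp only
        split_ifs <;> omega
    · rw [Nat.odd_iff] at hio
      refine ⟨(i, ⟨m, by omega⟩), Or.inl rfl, ?_, ?_⟩
      · rw [wallGraph, SimpleGraph.fromRel_adj]
        exact ⟨by simp [Prod.ext_iff, Fin.ext_iff]; omega,
          Or.inr (Or.inl ⟨rfl, by dsimp only; omega⟩)⟩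
      · dsimp only
        split_ifs <;> omega

lemma wall_horiz_count (n m r'' : ℕ) (hm : m + 2 < n) (hr : r'' ≤ n)
    (A B : Set (Fin n × Fin n))
    (hA : ∀ i : Fin n, (i, (⟨m + 1, by omega⟩ : Fin n)) ∈ A)
    (hB : ∀ i : Fin n, (i, (⟨m + 2, by omega⟩ : Fin n)) ∈ B) :
    r'' ≤ Set.ncard {e ∈ (wallGraph n).edgeSet | ∃ u ∈ A, ∃ v ∈ B, e = s(u, v)} := by
  refine le_ncard_of_inj
    (fun t => s(((⟨t.val, by omega⟩ : Fin n), (⟨m + 1, by omega⟩ : Fin n)),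
                ((⟨t.val, by omega⟩ : Fin n), (⟨m + 2, by omega⟩ : Fin n))))
    (fun a b hab => ?_) (fun t => ⟨?_, _, hA _, _, hB _, rfl⟩)
  · rw [Sym2.eq_iff] at hab
    rcases hab with ⟨h1, _⟩ | ⟨h1, _⟩
    · exact Fin.ext (by simpa [Prod.ext_iff, Fin.ext_iff] using (Prod.ext_iff.mp h1).1)
    · have := (Prod.ext_iff.mp h1).2
      simp [Fin.ext_iff] at this
  · rw [SimpleGraph.mem_edgeSet, wallGraph, SimpleGraph.fromRel_adj]
    exact ⟨by simp [Prod.ext_iff, Fin.ext_iff], Or.inl (Or.inl ⟨rfl, by simp⟩)⟩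

lemma wall_case (r r' : ℕ) (hrr : r' ≤ r) (h6 : 6 ≤ r) :
    HasThetaTwoMinor (wallGraph r) r r' := by
  refine ⟨{p | p.2.val = 0 ∨ p.2.val = 1}, {p | p.2.val = 2 ∨ p.2.val = 3},
          {p | p.2.val = 4 ∨ p.2.val = 5},
          ⟨(⟨0, by omega⟩, ⟨0, by omega⟩), Or.inl rfl⟩,
          ⟨(⟨0, by omega⟩, ⟨2, by omega⟩), Or.inl rfl⟩,
          ⟨(⟨0, by omega⟩, ⟨4, by omega⟩), Or.inl rfl⟩, ?_, ?_, ?_,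
          wall_pair_connected r 0 rfl (by omega), wall_pair_connected r 2 rfl (by omega),
          wall_pair_connected r 4 rfl (by omega), ?_, ?_⟩
  · rw [Set.disjoint_left]; rintro v (hv | hv) (hw | hw) <;> omega
  · rw [Set.disjoint_left]; rintro v (hv | hv) (hw | hw) <;> omega
  · rw [Set.disjoint_left]; rintro v (hv | hv) (hw | hw) <;> omega
  · exact wall_horiz_count r 0 r (by omega) le_rfl _ _ (fun i => Or.inr rfl) (fun i => Or.inl rfl)
  · exact wall_horiz_count r 2 r' (by omega) (hrr.trans (by omega)) _ _
      (fun i => Or.inr rfl) (fun i => Or.inl rfl)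

/-- for `1 ≤ r' ≤ r`, the graph `θ_{r,r'}` is a minor of the `r`-star, of the
`r`-path, of the `(r + r' + 1)`-fan, and (when `r ≥ 6`) of the `r`-wall. -/
theorem theta_two_minor_of_patterns (r r' : ℕ) (hr' : 1 ≤ r') (hrr : r' ≤ r) :
    HasThetaTwoMinor (_root_.starGraph r) r r' ∧
    HasThetaTwoMinor (nPathGraph r) r r' ∧
    HasThetaTwoMinor (fanGraph (r + r' + 1)) r r' ∧
    (6 ≤ r → HasThetaTwoMinor (wallGraph r) r r') :=
  ⟨star_case r r' hr' hrr, npath_case r r' hr' hrr, fan_case r r' hr' hrr,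
    fun h6 => wall_case r r' hrr h6⟩
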